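/- Let F₁^{σ₁}, F₂^{σ₂} be turbofunctions with σ₁, σ₂ strictly increasing, and suppose ρ⁺(F₁^{σ₁}, F₂^{σ₂}) = 0. Then their visualizations coincide: F₁ ∘ σ₁⁻¹ = F₂ ∘ σ₂⁻¹ as functions on [0,1]. -/

import Mathlib

open Filter

/-- A càdlàg function on `[0,1]`: right-continuous on `[0,1)`, left limits on `(0,1]`. -/
def Cadlag (f : unitInterval → ℝ) : Prop :=
  (∀ t : unitInterval, (t : ℝ) < 1 →
    Filter.Tendsto f (nhdsWithin t (Set.Ioi t)) (nhds (f t))) ∧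
  (∀ t : unitInterval, 0 < (t : ℝ) →
    ∃ l : ℝ, Filter.Tendsto f (nhdsWithin t (Set.Iio t)) (nhds l))

/-- Increasing homeomorphism of `[0,1]` onto itself. -/
def IsIncHomeo (γ : unitInterval → unitInterval) : Prop :=
  Continuous γ ∧ StrictMono γ ∧ Function.Bijective γ

/-- `Σ`: continuous non-decreasing surjections of `[0,1]` onto itself. -/
def InSigma (σ : unitInterval → unitInterval) : Prop :=
  Continuous σ ∧ Monotone σ ∧ Function.Surjective σ

/-- Skorokhod distance on functions on `[0,1]`. -/
noncomputable def skorokhodDist (f g : unitInterval → ℝ) : ℝ :=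
  sInf { c : ℝ | ∃ γ : unitInterval → unitInterval, IsIncHomeo γ ∧
    (⨆ s : unitInterval, |f s - g (γ s)|) + (⨆ s : unitInterval, |(s : ℝ) - (γ s : ℝ)|) = c }

/-- Extended Skorokhod semi-distance on turbofunctions. -/
noncomputable def rhoPlus (P Q : (unitInterval → ℝ) × (unitInterval → unitInterval)) : ℝ :=
  sInf { c : ℝ | ∃ γ : unitInterval → unitInterval, IsIncHomeo γ ∧
    (⨆ t : unitInterval, |P.1 (γ t) - Q.1 t|) +
    (⨆ t : unitInterval, |(P.2 (γ t) : ℝ) - (Q.2 t : ℝ)|) = c }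

instance : Fact ((0:ℝ) ≤ 1) := ⟨zero_le_one⟩

/-- Right-continuous inverse `σ⁻¹(s) = max {t : σ t ≤ s}` (as a supremum). -/
noncomputable def rcInv (σ : unitInterval → unitInterval) (s : unitInterval) : unitInterval :=
  sSup {t : unitInterval | σ t ≤ s}

open Set Topology

lemma cadlag_bounded {f : unitInterval → ℝ} (hf : Cadlag f) : ∃ M, ∀ t, |f t| ≤ M := by
  have hloc : ∀ t : unitInterval, ∃ M, ∀ᶠ u in 𝓝 t, |f u| ≤ M := by
    intro t
    have hr : ∃ Mr : ℝ, ∀ᶠ u in 𝓝[>] t, |f u| ≤ Mr := by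
      by_cases ht : (t:ℝ) < 1
      · refine ⟨|f t| + 1, ?_⟩
        have h2 := (Metric.tendsto_nhds.mp (hf.1 t ht)) 1 one_pos
        filter_upwards [h2] with u hu
        rw [Real.dist_eq] at hu
        have := abs_sub_abs_le_abs_sub (f u) (f t)
        linarith
      · refine ⟨0, ?_⟩
        have h1 : Set.Ioi t = (∅ : Set unitInterval) := by
          ext u; simp only [mem_Ioi, mem_empty_iff_false, iff_false, not_lt]
          have h1' : t = 1 := le_antisymm (unitInterval.le_one t) (by
            exact_mod_cast not_lt.mp ht)
          rw [h1']; exact unitInterval.le_one u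
        rw [h1, nhdsWithin_empty]
        exact eventually_bot
    have hl : ∃ Ml : ℝ, ∀ᶠ u in 𝓝[<] t, |f u| ≤ Ml := by
      by_cases ht : 0 < (t:ℝ)
      · obtain ⟨l, hl⟩ := hf.2 t ht
        refine ⟨|l| + 1, ?_⟩
        have h2 := (Metric.tendsto_nhds.mp hl) 1 one_pos
        filter_upwards [h2] with u hu
        rw [Real.dist_eq] at hu
        have := abs_sub_abs_le_abs_sub (f u) l
        linarith
      · refine ⟨0, ?_⟩
        have h1 : Set.Iio t = (∅ : Set unitInterval) := by
          ext u; simp only [mem_Iio, mem_empty_iff_false, iff_false, not_lt]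
          have h1' : t = 0 := le_antisymm (by exact_mod_cast not_lt.mp ht) (unitInterval.nonneg')
          rw [h1']; exact unitInterval.nonneg'
        rw [h1, nhdsWithin_empty]
        exact eventually_bot
    obtain ⟨Mr, hMr⟩ := hr
    obtain ⟨Ml, hMl⟩ := hl
    refine ⟨max (max Ml Mr) |f t|, ?_⟩
    have huniv : (Iio t ∪ ({t} ∪ Ioi t)) = (univ : Set unitInterval) := by
      ext u; simp only [mem_union, mem_Iio, mem_singleton_iff, mem_Ioi, mem_univ, iff_true]
      rcases lt_trichotomy u t with h | h | h
      · exact Or.inl h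
      · exact Or.inr (Or.inl h)
      · exact Or.inr (Or.inr h)
    have : 𝓝 t = 𝓝[Iio t] t ⊔ (𝓝[{t}] t ⊔ 𝓝[Ioi t] t) := by
      rw [← nhdsWithin_union, ← nhdsWithin_union, huniv, nhdsWithin_univ]
    rw [this, eventually_sup, eventually_sup]
    refine ⟨?_, ?_, ?_⟩
    · filter_upwards [hMl] with u hu; exact hu.trans (le_max_of_le_left (le_max_left _ _))
    · rw [nhdsWithin_singleton, eventually_pure]; exact le_max_right _ _
    · filter_upwards [hMr] with u hu; exact hu.trans (le_max_of_le_left (le_max_right _ _))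
  choose M hM using hloc
  obtain ⟨T, hT⟩ := isCompact_univ.elim_nhds_subcover (fun t => {u | |f u| ≤ M t})
    (fun t _ => hM t)
  have hTne : T.Nonempty := by
    have := hT.2 (mem_univ 0)
    simp only [mem_iUnion] at this
    obtain ⟨x, hx, _⟩ := this
    exact ⟨x, hx⟩
  refine ⟨T.sup' hTne M, fun u => ?_⟩
  have := hT.2 (mem_univ u)
  simp only [mem_iUnion] at this
  obtain ⟨x, hx, hux⟩ := this
  exact le_trans hux (Finset.le_sup' M hx)

lemma mono_surj_map_one {γ : unitInterval → unitInterval} (hm : Monotone γ)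
    (hs : Function.Surjective γ) : γ 1 = 1 := by
  obtain ⟨x, hx⟩ := hs 1
  refine le_antisymm (unitInterval.le_one _) ?_
  have hx1 : x ≤ 1 := by exact_mod_cast x.2.2
  calc (1 : unitInterval) = γ x := hx.symm
    _ ≤ γ 1 := hm hx1

theorem visualizations_coincide (F₁ F₂ : unitInterval → ℝ)
    (σ₁ σ₂ : unitInterval → unitInterval)
    (hF₁ : Cadlag F₁) (hF₂ : Cadlag F₂) (hσ₁ : InSigma σ₁) (hσ₂ : InSigma σ₂)
    (hs₁ : StrictMono σ₁) (hs₂ : StrictMono σ₂)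
    (h : rhoPlus (F₁, σ₁) (F₂, σ₂) = 0) :
    ∀ s : unitInterval, F₁ (Function.invFun σ₁ s) = F₂ (Function.invFun σ₂ s) := by
  obtain ⟨M₁, hM₁⟩ := cadlag_bounded hF₁
  obtain ⟨M₂, hM₂⟩ := cadlag_bounded hF₂
  -- Extraction of near-optimal time changes
  have key : ∀ ε > (0:ℝ), ∃ γ : unitInterval → unitInterval, IsIncHomeo γ ∧
      (∀ t, |F₁ (γ t) - F₂ t| < ε) ∧ (∀ t, |(σ₁ (γ t) : ℝ) - (σ₂ t : ℝ)| < ε) := by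
    intro ε hε
    simp only [rhoPlus] at h
    have hSne : { c : ℝ | ∃ γ : unitInterval → unitInterval, IsIncHomeo γ ∧
        (⨆ t : unitInterval, |F₁ (γ t) - F₂ t|) +
        (⨆ t : unitInterval, |(σ₁ (γ t) : ℝ) - (σ₂ t : ℝ)|) = c }.Nonempty :=
      ⟨_, id, ⟨continuous_id, strictMono_id, Function.bijective_id⟩, rfl⟩
    obtain ⟨c, ⟨γ, hγ, hc⟩, hcε⟩ := exists_lt_of_csInf_lt hSne (h ▸ hε)
    have bddA : BddAbove (Set.range fun t => |F₁ (γ t) - F₂ t|) := by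
      refine ⟨M₁ + M₂, ?_⟩
      rintro _ ⟨t, rfl⟩
      exact (abs_sub _ _).trans (add_le_add (hM₁ _) (hM₂ _))
    have bddB : BddAbove (Set.range fun t => |(σ₁ (γ t) : ℝ) - (σ₂ t : ℝ)|) := by
      refine ⟨1, ?_⟩
      rintro _ ⟨t, rfl⟩
      have h1 := (σ₁ (γ t)).2.1; have h2 := (σ₁ (γ t)).2.2
      have h3 := (σ₂ t).2.1; have h4 := (σ₂ t).2.2
      rw [abs_sub_le_iff]; constructor <;> linarith
    have hA0 : 0 ≤ ⨆ t, |F₁ (γ t) - F₂ t| := Real.iSup_nonneg fun _ => abs_nonneg _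
    have hB0 : 0 ≤ ⨆ t : unitInterval, |(σ₁ (γ t) : ℝ) - (σ₂ t : ℝ)| :=
      Real.iSup_nonneg fun _ => abs_nonneg _
    refine ⟨γ, hγ, fun t => ?_, fun t => ?_⟩
    · calc |F₁ (γ t) - F₂ t| ≤ ⨆ t, |F₁ (γ t) - F₂ t| := le_ciSup bddA t
        _ ≤ c := by rw [← hc]; linarith
        _ < ε := hcε
    · calc |(σ₁ (γ t) : ℝ) - (σ₂ t : ℝ)|
          ≤ ⨆ t : unitInterval, |(σ₁ (γ t) : ℝ) - (σ₂ t : ℝ)| := le_ciSup bddB t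
        _ ≤ c := by rw [← hc]; linarith
        _ < ε := hcε
  intro s
  have bij₁ : Function.Bijective σ₁ := ⟨hs₁.injective, hσ₁.2.2⟩
  have bij₂ : Function.Bijective σ₂ := ⟨hs₂.injective, hσ₂.2.2⟩
  set t₁ := Function.invFun σ₁ s with ht₁def
  set t₂ := Function.invFun σ₂ s with ht₂def
  have ht₁ : σ₁ t₁ = s := Function.rightInverse_invFun bij₁.2 s
  have ht₂ : σ₂ t₂ = s := Function.rightInverse_invFun bij₂.2 s
  have hσ₁1 : σ₁ 1 = 1 := mono_surj_map_one hσ₁.2.1 hσ₁.2.2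
  have hσ₂1 : σ₂ 1 = 1 := mono_surj_map_one hσ₂.2.1 hσ₂.2.2
  have main : ∀ δ > (0:ℝ), |F₁ t₁ - F₂ t₂| ≤ δ := by
    intro δ hδ
    by_cases hc : (t₂ : ℝ) < 1
    · -- main case: t₂ < 1
      have ht₁lt : (t₁ : ℝ) < 1 := by
        by_contra hcon
        have h1 : t₁ = 1 := le_antisymm (unitInterval.le_one _)
          (by exact_mod_cast not_lt.mp hcon)
        have hs1 : s = 1 := by rw [← ht₁, h1, hσ₁1]
        have : t₂ = 1 := bij₂.1 (by rw [ht₂, hσ₂1, hs1])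
        rw [this] at hc; simp at hc
      -- inverse homeomorphism of σ₁
      have hcont_e : Continuous (Equiv.ofBijective σ₁ bij₁) := hσ₁.1
      let ho : unitInterval ≃ₜ unitInterval := hcont_e.homeoOfEquivCompactToT2
      have hoapp : ∀ x, ho x = σ₁ x := fun x => rfl
      set τ : unitInterval → unitInterval := fun x => ho.symm x with hτdef
      have hτσ : ∀ x, τ (σ₁ x) = x := fun x => ho.symm_apply_apply x
      have hστ : ∀ x, σ₁ (τ x) = x := fun x => ho.apply_symm_apply x
      have hτcont : Continuous τ := ho.symm.continuous
      set g : unitInterval → unitInterval := fun u => τ (σ₂ u) with hgdef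
      have hgt₂ : g t₂ = t₁ := by rw [hgdef]; simp only; rw [ht₂, ← ht₁, hτσ]
      have hτmono : StrictMono τ := by
        intro a b hab
        by_contra hcon
        have : b ≤ a := by
          have := hs₁.monotone (not_lt.mp hcon)
          rwa [hστ, hστ] at this
        exact absurd hab (not_lt.mpr this)
      have hgmono : StrictMono g := fun a b hab => hτmono (hs₂ hab)
      -- right continuity of F₁ at t₁
      obtain ⟨η, hηpos, hη⟩ := Metric.tendsto_nhdsWithin_nhds.mp (hF₁.1 t₁ ht₁lt)
        (δ/3) (by positivity)
      haveI : (𝓝[>] t₂).NeBot := nhdsGT_neBot_of_exists_gt ⟨1, by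
        change (t₂ : ℝ) < ((1 : unitInterval) : ℝ); exact_mod_cast hc⟩
      have hg_tendsto : Tendsto g (𝓝[>] t₂) (𝓝 t₁) := by
        rw [← hgt₂]
        exact ((hτcont.comp hσ₂.1).tendsto t₂).mono_left nhdsWithin_le_nhds
      have E1 : ∀ᶠ u in 𝓝[>] t₂, |F₂ u - F₂ t₂| < δ/3 := by
        have := (Metric.tendsto_nhds.mp (hF₂.1 t₂ hc)) (δ/3) (by positivity)
        filter_upwards [this] with u hu
        rwa [Real.dist_eq] at hu
      have E2 : ∀ᶠ u in 𝓝[>] t₂, dist (g u) t₁ < η :=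
        (Metric.tendsto_nhds.mp hg_tendsto) η hηpos
      have E3 : ∀ᶠ u in 𝓝[>] t₂, t₂ < u := eventually_mem_nhdsWithin
      obtain ⟨u, hu1, hu2, hu3⟩ := (E1.and (E2.and E3)).exists
      have hgu1 : t₁ < g u := hgt₂ ▸ hgmono hu3
      have hgu1' : (t₁ : ℝ) < (g u : ℝ) := hgu1
      have hgu2 : (g u : ℝ) < (t₁ : ℝ) + η := by
        rw [Subtype.dist_eq, Real.dist_eq, abs_lt] at hu2; linarith [hu2.2]
      set r : ℝ := min ((g u : ℝ) - t₁) ((t₁ : ℝ) + η - g u) with hrdef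
      have hrpos : 0 < r := lt_min (by linarith) (by linarith)
      obtain ⟨ε₀, hε₀pos, hε₀⟩ := Metric.continuous_iff.mp hτcont (σ₂ u) r hrpos
      set ε : ℝ := min ε₀ (δ/3) with hεdef
      have hεpos : 0 < ε := lt_min hε₀pos (by positivity)
      obtain ⟨γ, hγ, hAp, hBp⟩ := key ε hεpos
      have h1 : dist (σ₁ (γ u)) (σ₂ u) < ε₀ := by
        rw [Subtype.dist_eq, Real.dist_eq]
        exact (hBp u).trans_le (min_le_left _ _)
      have h2 := hε₀ _ h1
      rw [hτσ] at h2
      have h2' : |(γ u : ℝ) - (g u : ℝ)| < r := by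
        rwa [Subtype.dist_eq, Real.dist_eq] at h2
      rw [abs_lt] at h2'
      have hr1 : r ≤ (g u : ℝ) - t₁ := min_le_left _ _
      have hr2 : r ≤ (t₁ : ℝ) + η - g u := min_le_right _ _
      have hγu1 : t₁ < γ u := by
        rw [← Subtype.coe_lt_coe]; linarith [h2'.2]
      have hγu2 : dist (γ u) t₁ < η := by
        rw [Subtype.dist_eq, Real.dist_eq, abs_lt]
        constructor <;> [linarith [h2'.2]; linarith [h2'.1]]
      have h3 : |F₁ (γ u) - F₁ t₁| < δ/3 := by
        have := hη hγu1 hγu2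
        rwa [Real.dist_eq] at this
      have h4 : |F₁ (γ u) - F₂ u| < δ/3 := (hAp u).trans_le (min_le_right _ _)
      have habs1 := abs_sub_abs_le_abs_sub (F₁ t₁) (F₁ (γ u))
      have c1 := abs_lt.mp h3
      have c2 := abs_lt.mp h4
      have c3 := abs_lt.mp hu1
      rw [abs_le]
      constructor <;> linarith [c1.1, c1.2, c2.1, c2.2, c3.1, c3.2]
    · -- t₂ = 1
      have ht₂1 : t₂ = 1 := le_antisymm (unitInterval.le_one _)
        (by exact_mod_cast not_lt.mp hc)
      have hs1 : s = 1 := by rw [← ht₂, ht₂1, hσ₂1]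
      have ht₁1 : t₁ = 1 := bij₁.1 (by rw [ht₁, hσ₁1, hs1])
      obtain ⟨γ, hγ, hAp, _⟩ := key δ hδ
      have hγ1 : γ 1 = 1 := mono_surj_map_one hγ.2.1.monotone hγ.2.2.2
      have h5 := hAp 1
      rw [hγ1] at h5
      rw [ht₁1, ht₂1]
      linarith
  have : |F₁ t₁ - F₂ t₂| ≤ 0 := by
    refine le_of_forall_pos_le_add fun δ hδ => ?_
    simpa using main δ hδ
  have := le_antisymm this (abs_nonneg _)
  exact sub_eq_zero.mp (abs_eq_zero.mp this)
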